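/- The Hausdorff dimension of A_1 equals 0. -/

import Mathlib

open Filter MeasureTheory Real Set

noncomputable section

/-- `Σ₂ = {0,1}^ℕ`: the space of 0-1 sequences `(x_k)_{k ≥ 1}`, where the entry `x_k`
(for `k ≥ 1`) is represented by `x (k-1) : Bool`. -/
abbrev Sigma2 : Type := ℕ → Bool

/-- The metric `ρ((x_k),(y_k)) = 2^{-min{n : x_n ≠ y_n}}` (up to the indexing convention
`dist x y = (1/2)^{first index where x,y differ}`). -/
noncomputable instance : MetricSpace Sigma2 :=
  PiNat.metricSpaceOfDiscreteUniformity fun _ => rfl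

/-- The digit `x_k ∈ {0,1}` (for `k ≥ 1`) of a sequence, as a real number. -/
def xval (x : Sigma2) (k : ℕ) : ℝ := if x (k - 1) then 1 else 0

/-- `A_θ = {(x_k) ∈ Σ₂ : lim_{n→∞} (1/n) ∑_{k=1}^n x_k x_{2k} = θ}`. -/
def Aset (θ : ℝ) : Set Sigma2 :=
  {x | Tendsto (fun n : ℕ => (∑ k ∈ Finset.Icc 1 n, xval x k * xval x (2 * k)) / (n : ℝ))
    atTop (nhds θ)}

/-- The cylinder set `[u]` of sequences starting with the finite word `u`
(a list `u` represents the word `u_1 … u_n` with `u_k = u.getD (k-1) false`). -/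
def cylinder (u : List Bool) : Set Sigma2 :=
  {x | ∀ i < u.length, x i = u.getD i false}

/-- Initial distribution: `π(0) = 1 - p`, `π(1) = p`. -/
def initProb (p : ℝ) (b : Bool) : ℝ := if b then p else 1 - p

/-- Transition probabilities: `P(0,0) = 1-p`, `P(0,1) = p`, `P(1,0) = q`, `P(1,1) = 1-q`. -/
def transProb (p q : ℝ) (a b : Bool) : ℝ :=
  if a then (if b then 1 - q else q) else (if b then p else 1 - p)

/-- Markov weight `μ[w] = π(w_1) ∏_{j=1}^{m-1} P(w_j, w_{j+1})` of a finite word `w`. -/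
def mweight (p q : ℝ) (w : List Bool) : ℝ :=
  if w = [] then 1
  else initProb p (w.getD 0 false) *
    ∏ j ∈ Finset.range (w.length - 1), transProb p q (w.getD j false) (w.getD (j + 1) false)

/-- The subword `u|_{J(i)} = (u_i, u_{2i}, u_{4i}, …)` of a finite word `u` along the
geometric progression `J(i) = {2^r i : r ≥ 0}`, keeping the indices `2^r i ≤ |u|`. -/
def subword (u : List Bool) (i : ℕ) : List Bool :=
  ((List.range (u.length + 1)).filter (fun r => 2 ^ r * i ≤ u.length)).map
    (fun r => u.getD (2 ^ r * i - 1) false)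

/-- `ℙ_μ[u] = ∏_{i ≤ n, i odd} μ[u|_{J(i)}]` for a finite word `u` of length `n`. -/
def PmuWord (p q : ℝ) (u : List Bool) : ℝ :=
  ∏ i ∈ (Finset.Icc 1 u.length).filter (fun i => Odd i), mweight p q (subword u i)

/-- `Pm` is the (probability) measure `ℙ_μ` on `Σ₂` determined by its values
`ℙ_μ[u] = ∏_{i odd} μ[u|_{J(i)}]` on cylinder sets. -/
def IsPmu (p q : ℝ) (Pm : Measure Sigma2) : Prop :=
  IsProbabilityMeasure Pm ∧
    ∀ u : List Bool, Pm (cylinder u) = ENNReal.ofReal (PmuWord p q u)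

/-- The initial word `x_1^n = x_1 … x_n` of a sequence. -/
def word (x : Sigma2) (n : ℕ) : List Bool := (List.range n).map x

/-- `N_1(x_m^n) = #{k ∈ [m,n] : x_k = 1}`. -/
def N1 (x : Sigma2) (m n : ℕ) : ℕ :=
  ((Finset.Icc m n).filter (fun k => x (k - 1) = true)).card

/-- `N_{ij}(x_1^m) = #{k ≤ m : x_k = i, x_{2k} = j}` (digits `i, j` as booleans). -/
def Nij (x : Sigma2) (i j : Bool) (m : ℕ) : ℕ :=
  ((Finset.Icc 1 m).filter (fun k => x (k - 1) = i ∧ x (2 * k - 1) = j)).card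

/-- `N_{1,odd}(x_1^n) = #{k ≤ n : k odd, x_k = 1}`. -/
def N1odd (x : Sigma2) (n : ℕ) : ℕ :=
  ((Finset.Icc 1 n).filter (fun k => Odd k ∧ x (k - 1) = true)).card

/-- The binary entropy function `H(t) = -t log₂ t - (1-t) log₂ (1-t)`. -/
def Hent (t : ℝ) : ℝ := -(t * Real.logb 2 t) - (1 - t) * Real.logb 2 (1 - t)

open Topology
open scoped ENNReal NNReal

/-! Auxiliary development -/

theorem diam_cyl' (z : Sigma2) (n : ℕ) :
    EMetric.diam (PiNat.cylinder z n) ≤ ENNReal.ofReal ((1/2)^n) := by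
  apply EMetric.diam_le
  intro a ha b hb
  rw [edist_dist]
  apply ENNReal.ofReal_le_ofReal
  have hmem : b ∈ PiNat.cylinder a n := by
    rw [PiNat.mem_cylinder_iff_eq.1 ha] at *
    exact hb
  calc dist a b = dist b a := dist_comm a b
    _ ≤ (1/2)^n := PiNat.mem_cylinder_iff_dist_le.1 hmem

def Cset (δ : ℝ) (N : ℕ) : Set Sigma2 :=
  {x | ∀ n, N ≤ n → (((Finset.range n).filter (fun i => x i = false)).card : ℝ) ≤ δ * n}

theorem xval_nonneg (x : Sigma2) (k : ℕ) : 0 ≤ xval x k := by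
  unfold xval; split <;> norm_num

theorem xval_le_one (x : Sigma2) (k : ℕ) : xval x k ≤ 1 := by
  unfold xval; split <;> norm_num

theorem Aset_subset_iUnion_Cset {δ : ℝ} (hδ : 0 < δ) : Aset 1 ⊆ ⋃ N, Cset δ N := by
  intro x hx
  have h : ∀ᶠ n : ℕ in atTop,
      1 - δ < (∑ k ∈ Finset.Icc 1 n, xval x k * xval x (2 * k)) / (n : ℝ) :=
    hx.eventually (eventually_gt_nhds (by linarith))
  obtain ⟨N, hN⟩ := eventually_atTop.1 h
  refine mem_iUnion.2 ⟨N, fun n hn => ?_⟩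
  rcases Nat.eq_zero_or_pos n with rfl | hpos
  · simp
  have hn0 : (0:ℝ) < n := by exact_mod_cast hpos
  set S := ∑ k ∈ Finset.Icc 1 n, xval x k * xval x (2 * k) with hSdef
  have hS : (1 - δ) * n < S := by
    have := hN n hn
    rw [lt_div_iff₀ hn0] at this
    exact this
  -- S ≤ number of ones in the prefix
  have hsum : S ≤ ∑ i ∈ Finset.range n, (if x i = true then (1:ℝ) else 0) := by
    rw [hSdef, show Finset.Icc 1 n = Finset.Ico 1 (n+1) from (Finset.Ico_add_one_right_eq_Icc 1 n).symm,
      Finset.sum_Ico_eq_sum_range]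
    simp only [Nat.add_sub_cancel]
    apply Finset.sum_le_sum
    intro i _
    have h1 : xval x (1 + i) = (if x i = true then (1:ℝ) else 0) := by
      simp [xval]
    calc xval x (1 + i) * xval x (2 * (1 + i)) ≤ xval x (1 + i) * 1 := by
          exact mul_le_mul_of_nonneg_left (xval_le_one _ _) (xval_nonneg _ _)
      _ = (if x i = true then (1:ℝ) else 0) := by rw [mul_one, h1]
  have hone : ∑ i ∈ Finset.range n, (if x i = true then (1:ℝ) else 0)
      = (((Finset.range n).filter (fun i => x i = true)).card : ℝ) := by
    rw [Finset.sum_boole]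
  have hsplit : ((Finset.range n).filter (fun i => x i = true)).card
      + ((Finset.range n).filter (fun i => x i = false)).card = n := by
    have := Finset.card_filter_add_card_filter_not (s := Finset.range n)
      (fun i => x i = true)
    simpa [Bool.not_eq_true, Finset.card_range] using this
  have hcard : (((Finset.range n).filter (fun i => x i = false)).card : ℝ)
      = n - (((Finset.range n).filter (fun i => x i = true)).card : ℝ) := by
    have h2 : (((Finset.range n).filter (fun i => x i = true)).card : ℝ)
        + (((Finset.range n).filter (fun i => x i = false)).card : ℝ) = n := by
      exact_mod_cast congrArg (Nat.cast (R := ℝ)) hsplit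
    linarith
  rw [hcard]
  have : S ≤ (((Finset.range n).filter (fun i => x i = true)).card : ℝ) := by
    rw [← hone]; exact hsum
  nlinarith

theorem card_good_le {δ : ℝ} (hδ0 : 0 < δ) (hδ1 : δ ≤ 1) (n : ℕ) :
    (((Finset.univ : Finset (Fin n → Bool)).filter (fun v =>
      ((Finset.univ.filter (fun i => v i = false)).card : ℝ) ≤ δ * n)).card : ℝ)
      ≤ (Real.exp (δ * Real.log (1/δ)) * (1+δ)) ^ n := by
  set d := ⌊δ * n⌋₊ with hd
  have hdn : d ≤ n := by
    have h1 : δ * n ≤ (n:ℝ) := by nlinarith [(Nat.cast_nonneg n : (0:ℝ) ≤ (n:ℝ))]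
    calc d ≤ ⌊(n:ℝ)⌋₊ := Nat.floor_le_floor h1
      _ = n := Nat.floor_natCast n
  -- Step A : card ≤ ∑_{j ≤ d} choose n j
  have hA : ((Finset.univ : Finset (Fin n → Bool)).filter (fun v =>
      ((Finset.univ.filter (fun i => v i = false)).card : ℝ) ≤ δ * n)).card
      ≤ ∑ j ∈ Finset.range (d+1), n.choose j := by
    have hinj : ∀ v ∈ (Finset.univ : Finset (Fin n → Bool)).filter (fun v =>
        ((Finset.univ.filter (fun i => v i = false)).card : ℝ) ≤ δ * n),
        (Finset.univ.filter (fun i => v i = false)) ∈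
          (Finset.range (d+1)).biUnion (fun j => Finset.powersetCard j (Finset.univ : Finset (Fin n))) := by
      intro v hv
      rw [Finset.mem_filter] at hv
      refine Finset.mem_biUnion.2 ⟨(Finset.univ.filter (fun i => v i = false)).card,
        Finset.mem_range.2 (Nat.lt_succ_of_le (Nat.le_floor hv.2)), ?_⟩
      exact Finset.mem_powersetCard.2 ⟨Finset.subset_univ _, rfl⟩
    calc ((Finset.univ : Finset (Fin n → Bool)).filter (fun v =>
        ((Finset.univ.filter (fun i => v i = false)).card : ℝ) ≤ δ * n)).card
        ≤ ((Finset.range (d+1)).biUnion (fun j => Finset.powersetCard j (Finset.univ : Finset (Fin n)))).card := by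
          apply Finset.card_le_card_of_injOn (fun v => Finset.univ.filter (fun i => v i = false)) (fun v hv => hinj v hv)
          intro v _ w _ hvw
          funext i
          have : i ∈ Finset.univ.filter (fun i => v i = false) ↔
              i ∈ Finset.univ.filter (fun i => w i = false) := by
            rw [show Finset.univ.filter (fun i => v i = false)
              = Finset.univ.filter (fun i => w i = false) from hvw]
          simp only [Finset.mem_filter, Finset.mem_univ, true_and] at this
          cases hv : v i <;> cases hw : w i <;> simp_all
      _ ≤ ∑ j ∈ Finset.range (d+1), (Finset.powersetCard j (Finset.univ : Finset (Fin n))).card := by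
          apply Finset.card_biUnion_le
      _ = ∑ j ∈ Finset.range (d+1), n.choose j := by
          simp [Finset.card_powersetCard]
  -- Step B : ∑_{j ≤ d} choose n j * δ^d ≤ (1+δ)^n
  have hB : (∑ j ∈ Finset.range (d+1), (n.choose j : ℝ)) * δ^d ≤ (1+δ)^n := by
    have h1 : (∑ j ∈ Finset.range (d+1), (n.choose j : ℝ)) * δ^d
        = ∑ j ∈ Finset.range (d+1), (n.choose j : ℝ) * δ^d := by
      rw [Finset.sum_mul]
    rw [h1]
    have h2 : ∑ j ∈ Finset.range (d+1), (n.choose j : ℝ) * δ^d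
        ≤ ∑ j ∈ Finset.range (d+1), (n.choose j : ℝ) * δ^j := by
      apply Finset.sum_le_sum
      intro j hj
      have : δ^d ≤ δ^j :=
        pow_le_pow_of_le_one hδ0.le hδ1 (Nat.lt_succ_iff.1 (Finset.mem_range.1 hj))
      exact mul_le_mul_of_nonneg_left this (Nat.cast_nonneg _)
    have h3 : ∑ j ∈ Finset.range (d+1), (n.choose j : ℝ) * δ^j
        ≤ ∑ j ∈ Finset.range (n+1), (n.choose j : ℝ) * δ^j := by
      apply Finset.sum_le_sum_of_subset_of_nonneg
      · exact Finset.range_subset_range.2 (Nat.add_le_add_right hdn 1)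
      · intro j _ _
        positivity
    have h4 : (1+δ)^n = ∑ j ∈ Finset.range (n+1), (n.choose j : ℝ) * δ^j := by
      rw [add_comm, add_pow]
      apply Finset.sum_congr rfl
      intro j _
      ring
    linarith
  -- Step C : assemble
  have hδd : (0:ℝ) < δ^d := pow_pos hδ0 d
  have hC : (1/δ)^d ≤ Real.exp (δ * Real.log (1/δ)) ^ n := by
    have h1 : ((1:ℝ)/δ)^d = (1/δ) ^ ((d:ℝ)) := by rw [Real.rpow_natCast]
    have h2 : (1/δ : ℝ) ^ ((d:ℝ)) ≤ (1/δ) ^ (δ * n) := by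
      apply Real.rpow_le_rpow_of_exponent_le
      · rw [le_div_iff₀ hδ0]; linarith
      · exact Nat.floor_le (by positivity)
    have h3 : (1/δ : ℝ) ^ (δ * (n:ℝ)) = Real.exp (δ * Real.log (1/δ)) ^ n := by
      rw [Real.rpow_def_of_pos (by positivity), ← Real.exp_nat_mul]
      ring_nf
    rw [h1]
    rw [h3] at h2
    exact h2
  have key : (((Finset.univ : Finset (Fin n → Bool)).filter (fun v =>
      ((Finset.univ.filter (fun i => v i = false)).card : ℝ) ≤ δ * n)).card : ℝ)
      ≤ (1/δ)^d * (1+δ)^n := by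
    have hcast : (((Finset.univ : Finset (Fin n → Bool)).filter (fun v =>
        ((Finset.univ.filter (fun i => v i = false)).card : ℝ) ≤ δ * n)).card : ℝ)
        ≤ ∑ j ∈ Finset.range (d+1), (n.choose j : ℝ) := by
      exact_mod_cast Nat.cast_le.2 hA
    have h5 : (∑ j ∈ Finset.range (d+1), (n.choose j : ℝ)) ≤ (1/δ)^d * (1+δ)^n := by
      rw [div_pow, one_pow, div_mul_eq_mul_div, le_div_iff₀ hδd]
      linarith [hB]
    linarith
  calc _ ≤ (1/δ)^d * (1+δ)^n := key
    _ ≤ Real.exp (δ * Real.log (1/δ)) ^ n * (1+δ)^n := by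
        apply mul_le_mul_of_nonneg_right hC (by positivity)
    _ = (Real.exp (δ * Real.log (1/δ)) * (1+δ)) ^ n := (mul_pow _ _ _).symm

open scoped ENNReal NNReal

theorem card_filter_fin_eq (x : Sigma2) (n : ℕ) :
    ((Finset.univ : Finset (Fin n)).filter (fun i : Fin n => x ↑i = false)).card
      = ((Finset.range n).filter (fun i => x i = false)).card := by
  rw [Finset.card_filter, Finset.card_filter]
  exact Fin.sum_univ_eq_sum_range (fun i => if x i = false then 1 else 0) n

theorem dimH_Cset_le {δ : ℝ} (hδ0 : 0 < δ) (hδ1 : δ ≤ 1) (ε : ℝ≥0) (hε : 0 < ε)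
    (hlt : Real.exp (δ * Real.log (1/δ)) * (1+δ) < 2 ^ (ε:ℝ)) (N : ℕ) :
    dimH (Cset δ N) ≤ ε := by
  apply dimH_le_of_hausdorffMeasure_ne_top
  suffices h : μH[(ε:ℝ)] (Cset δ N) = 0 by simp [h]
  obtain ⟨a, ha⟩ : ∃ a : ℝ, a = Real.exp (δ * Real.log (1/δ)) * (1+δ) := ⟨_, rfl⟩
  obtain ⟨b, hb⟩ : ∃ b : ℝ, b = (1/2 : ℝ) ^ (ε:ℝ) := ⟨_, rfl⟩
  rw [← ha] at hlt
  have ha0 : 0 < a := by rw [ha]; positivity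
  have hb0 : 0 < b := by rw [hb]; positivity
  have hab1 : a * b < 1 := by
    have h2 : (2:ℝ) ^ (ε:ℝ) > 0 := by positivity
    have hbeq : b = ((2:ℝ) ^ (ε:ℝ))⁻¹ := by
      rw [hb, one_div, Real.inv_rpow (by norm_num)]
    rw [hbeq]
    rw [mul_inv_lt_iff₀ h2, one_mul]
    exact hlt
  -- the covering family
  set t : ∀ n : ℕ, (Fin n → Bool) → Set Sigma2 := fun n v =>
    if ((Finset.univ.filter (fun i => v i = false)).card : ℝ) ≤ δ * n then
      PiNat.cylinder (fun i => if h : i < n then v ⟨i, h⟩ else false) n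
    else ∅ with ht
  have hμ : μH[(ε:ℝ)] (Cset δ N) ≤
      liminf (fun n => ∑ v : Fin n → Bool, EMetric.diam (t n v) ^ (ε:ℝ)) atTop := by
    apply MeasureTheory.Measure.hausdorffMeasure_le_liminf_sum (ε:ℝ) (Cset δ N)
      (fun n => ENNReal.ofReal ((1/2)^n))
    · have : Tendsto (fun n : ℕ => ((1:ℝ)/2)^n) atTop (𝓝 0) :=
        tendsto_pow_atTop_nhds_zero_of_lt_one (by norm_num) (by norm_num)
      simpa using ENNReal.tendsto_ofReal this
    · apply Eventually.of_forall
      intro n v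
      rw [ht]
      dsimp only
      split
      · exact diam_cyl' _ n
      · simp
    · filter_upwards [eventually_ge_atTop N] with n hn
      intro x hx
      refine mem_iUnion.2 ⟨fun i : Fin n => x i, ?_⟩
      rw [ht]
      dsimp only
      rw [if_pos]
      · intro i hi
        simp [hi]
      · rw [card_filter_fin_eq]
        exact hx n hn
  have hbound : ∀ n : ℕ, (∑ v : Fin n → Bool, EMetric.diam (t n v) ^ (ε:ℝ))
      ≤ ENNReal.ofReal (a^n * b^n) := by
    intro n
    have hstep : ∀ v : Fin n → Bool, EMetric.diam (t n v) ^ (ε:ℝ)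
        ≤ if ((Finset.univ.filter (fun i => v i = false)).card : ℝ) ≤ δ * n then
            (ENNReal.ofReal ((1/2)^n)) ^ (ε:ℝ) else 0 := by
      intro v
      rw [ht]
      dsimp only
      split
      · exact ENNReal.rpow_le_rpow (diam_cyl' _ n) (by positivity)
      · rw [show EMetric.diam (∅ : Set Sigma2) = 0 from Metric.ediam_empty, ENNReal.zero_rpow_of_pos (by exact_mod_cast hε)]
    calc (∑ v : Fin n → Bool, EMetric.diam (t n v) ^ (ε:ℝ))
        ≤ ∑ v : Fin n → Bool,
            (if ((Finset.univ.filter (fun i => v i = false)).card : ℝ) ≤ δ * n then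
              (ENNReal.ofReal ((1/2)^n)) ^ (ε:ℝ) else 0) := Finset.sum_le_sum (fun v _ => hstep v)
      _ = (((Finset.univ : Finset (Fin n → Bool)).filter (fun v =>
            ((Finset.univ.filter (fun i => v i = false)).card : ℝ) ≤ δ * n)).card)
            * (ENNReal.ofReal ((1/2)^n)) ^ (ε:ℝ) := by
          rw [Finset.sum_ite, Finset.sum_const, Finset.sum_const_zero, add_zero, nsmul_eq_mul]
      _ ≤ ENNReal.ofReal (a^n) * ENNReal.ofReal (b^n) := by
          apply mul_le_mul'
          · rw [← ENNReal.ofReal_natCast]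
            exact ENNReal.ofReal_le_ofReal (by rw [ha]; exact card_good_le hδ0 hδ1 n)
          · rw [ENNReal.ofReal_rpow_of_pos (by positivity)]
            apply ENNReal.ofReal_le_ofReal
            rw [hb, ← Real.rpow_natCast ((1:ℝ)/2) n, ← Real.rpow_mul (by norm_num),
              mul_comm, Real.rpow_mul (by norm_num), Real.rpow_natCast]
      _ = ENNReal.ofReal (a^n * b^n) := (ENNReal.ofReal_mul (by positivity)).symm
  have hlim : Tendsto (fun n : ℕ => ENNReal.ofReal (a^n * b^n)) atTop (𝓝 0) := by
    have h1 : Tendsto (fun n : ℕ => (a*b)^n) atTop (𝓝 0) :=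
      tendsto_pow_atTop_nhds_zero_of_lt_one (by positivity) hab1
    have h2 : (fun n : ℕ => ENNReal.ofReal (a^n * b^n))
        = fun n : ℕ => ENNReal.ofReal ((a*b)^n) := by
      funext n
      rw [mul_pow]
    rw [h2]
    simpa using ENNReal.tendsto_ofReal h1
  refine le_antisymm ?_ (zero_le' )
  calc μH[(ε:ℝ)] (Cset δ N)
      ≤ liminf (fun n => ∑ v : Fin n → Bool, EMetric.diam (t n v) ^ (ε:ℝ)) atTop := hμ
    _ ≤ liminf (fun n : ℕ => ENNReal.ofReal (a^n * b^n)) atTop :=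
        liminf_le_liminf (Eventually.of_forall hbound)
    _ = 0 := hlim.liminf_eq

theorem exists_good_delta (ε : ℝ≥0) (hε : 0 < ε) :
    ∃ δ : ℝ, 0 < δ ∧ δ ≤ 1 ∧ Real.exp (δ * Real.log (1/δ)) * (1+δ) < 2 ^ (ε:ℝ) := by
  have h2 : (1:ℝ) < 2 ^ (ε:ℝ) :=
    Real.one_lt_rpow_iff_of_pos (by norm_num) |>.2 (Or.inl ⟨one_lt_two, by exact_mod_cast hε⟩)
  have hg : Tendsto (fun x : ℝ => Real.exp (-(x * Real.log x)) * (1+x)) (𝓝 0) (𝓝 1) := by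
    have hc : Continuous fun x : ℝ => Real.exp (-(x * Real.log x)) * (1+x) :=
      (Real.continuous_mul_log.neg.rexp).mul (continuous_const.add continuous_id)
    have := hc.tendsto 0
    simpa using this
  have hev : ∀ᶠ x : ℝ in 𝓝[>] 0,
      Real.exp (-(x * Real.log x)) * (1+x) < 2 ^ (ε:ℝ) :=
    (hg.mono_left nhdsWithin_le_nhds).eventually (eventually_lt_nhds h2)
  have hev2 : ∀ᶠ x : ℝ in 𝓝[>] 0, x ∈ Ioo (0:ℝ) 1 :=
    Ioo_mem_nhdsGT_of_mem ⟨le_refl 0, zero_lt_one⟩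
  obtain ⟨δ, h1, hmem⟩ := (hev.and hev2).exists
  refine ⟨δ, hmem.1, hmem.2.le, ?_⟩
  have : δ * Real.log (1/δ) = -(δ * Real.log δ) := by
    rw [one_div, Real.log_inv]
    ring
  rw [this]
  exact h1

/-- `dim_H(A_1) = 0`. -/
theorem dimH_Aset_one : dimH (Aset 1) = 0 := by
  refine le_antisymm ?_ (zero_le' )
  refine ENNReal.le_of_forall_pos_le_add fun ε hε _ => ?_
  rw [zero_add]
  obtain ⟨δ, hδ0, hδ1, hδlt⟩ := exists_good_delta ε hε
  calc dimH (Aset 1) ≤ dimH (⋃ N, Cset δ N) := dimH_mono (Aset_subset_iUnion_Cset hδ0)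
    _ = ⨆ N, dimH (Cset δ N) := dimH_iUnion _
    _ ≤ (ε : ℝ≥0∞) := iSup_le fun N => dimH_Cset_le hδ0 hδ1 ε hε hδlt N
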